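/- Let Ω and Δ be locally compact Hausdorff spaces where Δ has no isolated points, X, Y Banach spaces, σ : Δ → Ω an injective map, and θ : C₀(Ω, X) → C₀(Δ, Y) a ℂ-linear map (not assumed bounded) such that for every ν ∈ Δ and every f ∈ C₀(Ω,X) vanishing on some neighbourhood of σ(ν), one has θ(f)(ν) = 0. Then θ is bounded. -/

import Mathlib

open ZeroAtInfty Filter Topology

namespace Stmt9Aux

open Set

variable {Ω : Type*} [TopologicalSpace Ω]
variable {X : Type*} [NormedAddCommGroup X] [NormedSpace ℂ X]

omit [NormedSpace ℂ X] in
lemma norm_apply_le' (f : C₀(Ω, X)) (x : Ω) : ‖f x‖ ≤ ‖f‖ := by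
  rw [← ZeroAtInftyContinuousMap.norm_toBCF_eq_norm]
  exact f.toBCF.norm_coe_le_norm x

omit [NormedSpace ℂ X] in
lemma norm_le_of' {f : C₀(Ω, X)} {C : ℝ} (hC : 0 ≤ C) (h : ∀ x, ‖f x‖ ≤ C) : ‖f‖ ≤ C := by
  rw [← ZeroAtInftyContinuousMap.norm_toBCF_eq_norm]
  exact (BoundedContinuousFunction.norm_le hC).mpr h

/-- evaluation as a continuous linear map -/
noncomputable def evCLM (x : Ω) : C₀(Ω, X) →L[ℂ] X :=
  LinearMap.mkContinuous
    { toFun := fun f => f x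
      map_add' := fun f g => rfl
      map_smul' := fun c f => rfl } 1
    (fun f => by simpa using norm_apply_le' f x)

@[simp] lemma evCLM_apply (x : Ω) (f : C₀(Ω, X)) : evCLM x f = f x := rfl

/-- multiplication of a `[0,1]`-valued continuous function with a `C₀` function -/
noncomputable def bmul (φ : C(Ω, ℝ)) (hφ : ∀ x, φ x ∈ Icc (0:ℝ) 1) (f : C₀(Ω, X)) :
    C₀(Ω, X) where
  toFun := fun x => φ x • f x
  continuous_toFun := (map_continuous φ).smul (map_continuous f)
  zero_at_infty' := by
    have h : Tendsto (fun x => ‖f x‖) (cocompact Ω) (𝓝 0) :=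
      tendsto_zero_iff_norm_tendsto_zero.mp (zero_at_infty f)
    refine tendsto_zero_iff_norm_tendsto_zero.mpr ?_
    refine squeeze_zero (fun x => norm_nonneg _) (fun x => ?_) h
    rw [norm_smul]
    have h1 : ‖φ x‖ ≤ 1 := by
      rw [Real.norm_eq_abs, abs_le]
      exact ⟨le_trans (by norm_num) (hφ x).1, (hφ x).2⟩
    calc ‖φ x‖ * ‖f x‖ ≤ 1 * ‖f x‖ := mul_le_mul_of_nonneg_right h1 (norm_nonneg _)
      _ = ‖f x‖ := one_mul _

@[simp] lemma bmul_apply (φ : C(Ω, ℝ)) (hφ : ∀ x, φ x ∈ Icc (0:ℝ) 1) (f : C₀(Ω, X)) (x : Ω) :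
    bmul φ hφ f x = φ x • f x := rfl

lemma bmul_norm_le (φ : C(Ω, ℝ)) (hφ : ∀ x, φ x ∈ Icc (0:ℝ) 1) (f : C₀(Ω, X)) :
    ‖bmul φ hφ f‖ ≤ ‖f‖ := by
  refine norm_le_of' (norm_nonneg f) (fun x => ?_)
  rw [bmul_apply, norm_smul]
  have h1 : ‖φ x‖ ≤ 1 := by
    rw [Real.norm_eq_abs, abs_le]; exact ⟨le_trans (by norm_num) (hφ x).1, (hφ x).2⟩
  calc ‖φ x‖ * ‖f x‖ ≤ 1 * ‖f x‖ := mul_le_mul_of_nonneg_right h1 (norm_nonneg _)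
    _ = ‖f x‖ := one_mul _
    _ ≤ ‖f‖ := norm_apply_le' f x

/-- a bump function equal to `1` near `ω`, compactly supported inside `W` -/
lemma bump {Ω : Type*} [TopologicalSpace Ω] [LocallyCompactSpace Ω] [T2Space Ω]
    {W : Set Ω} (hW : IsOpen W) {ω : Ω} (hω : ω ∈ W) :
    ∃ (φ : C(Ω, ℝ)) (N k : Set Ω), IsOpen N ∧ ω ∈ N ∧ (∀ x ∈ N, φ x = 1) ∧
      IsCompact k ∧ k ⊆ W ∧ (∀ x ∉ k, φ x = 0) ∧ (∀ x, φ x ∈ Icc (0:ℝ) 1) := by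
  obtain ⟨K, hKc, hωK, hKW⟩ := exists_compact_subset hW hω
  obtain ⟨k, hk, hkcl, hKk, hkW⟩ := exists_compact_closed_between hKc hW hKW
  have hd : Disjoint K (interior k)ᶜ := disjoint_compl_right_iff_subset.mpr hKk
  obtain ⟨φ, hφ1, hφ0, _, hφI⟩ :=
    exists_continuous_one_zero_of_isCompact hKc isOpen_interior.isClosed_compl hd
  exact ⟨φ, interior K, k, isOpen_interior, hωK, fun x hx => hφ1 (interior_subset hx), hk, hkW,
    fun x hx => hφ0 (fun h => hx (interior_subset h)), hφI⟩

/-- data for the gliding hump -/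
structure Pack (Ω Δ : Type*) (X : Type*) [TopologicalSpace Ω]
    [NormedAddCommGroup X] [NormedSpace ℂ X] where
  k : ℕ
  ν : Δ
  g : C₀(Ω, X)
  V : Set Ω

lemma pointwise_bound
    {Ω Δ : Type*} [TopologicalSpace Ω] [LocallyCompactSpace Ω] [T2Space Ω]
    [TopologicalSpace Δ] [T2Space Δ]
    (hni : ∀ ν : Δ, (𝓝[≠] ν).NeBot)
    {X Y : Type*} [NormedAddCommGroup X] [NormedSpace ℂ X] [CompleteSpace X]
    [NormedAddCommGroup Y] [NormedSpace ℂ Y]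
    (σ : Δ → Ω) (hσ : Function.Injective σ)
    (θ : C₀(Ω, X) →ₗ[ℂ] C₀(Δ, Y))
    (hloc : ∀ (ν : Δ) (f : C₀(Ω, X)),
      (∃ U : Set Ω, IsOpen U ∧ σ ν ∈ U ∧ ∀ ω ∈ U, f ω = 0) → θ f ν = 0)
    (ν₀ : Δ) :
    ∃ C : ℝ, ∀ f : C₀(Ω, X), ‖θ f ν₀‖ ≤ C * ‖f‖ := by
  by_contra hcon
  push_neg at hcon
  set ω₀ := σ ν₀ with hω₀def
  -- if two functions agree on an open neighbourhood of σ ν, then θ agrees at ν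
  have key_eq : ∀ (ν : Δ) (f g : C₀(Ω, X)) (N : Set Ω), IsOpen N → σ ν ∈ N →
      (∀ x ∈ N, f x = g x) → θ f ν = θ g ν := by
    intro ν f g N hNo hνN hfg
    have h0 : θ (f - g) ν = 0 := by
      refine hloc ν (f - g) ⟨N, hNo, hνN, fun x hx => ?_⟩
      rw [ZeroAtInftyContinuousMap.sub_apply, hfg x hx, sub_self]
    rw [map_sub θ f g, ZeroAtInftyContinuousMap.sub_apply, sub_eq_zero] at h0
    exact h0
  classical
  set P : Pack Ω Δ X → Prop := fun a =>
    IsOpen a.V ∧ σ a.ν ∈ a.V ∧ ω₀ ∉ closure a.V ∧ ‖a.g‖ ≤ (2:ℝ)⁻¹ ^ a.k ∧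
      (a.k : ℝ) < ‖θ a.g a.ν‖ ∧ ∀ x, x ∉ a.V → a.g x = 0 with hPdef
  set r : Pack Ω Δ X → Pack Ω Δ X → Prop := fun a b => a.k < b.k ∧ Disjoint a.V b.V with hrdef
  have step : ∀ s : Finset (Pack Ω Δ X), (∀ x ∈ s, P x) → ∃ y, P y ∧ ∀ x ∈ s, r x y := by
    intro s hs
    set W : Set Ω := (⋃ x ∈ s, closure x.V)ᶜ with hWdef
    have hWo : IsOpen W :=
      (Set.Finite.isClosed_biUnion s.finite_toSet (fun x _ => isClosed_closure)).isOpen_compl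
    have hω₀W : ω₀ ∈ W := by
      simp only [hWdef, mem_compl_iff, mem_iUnion, exists_prop, not_exists]
      rintro x ⟨hxs, hcl⟩
      exact (hs x hxs).2.2.1 hcl
    set k : ℕ := (s.sup fun x => x.k) + 1 with hkdef
    -- get a witness of unboundedness
    obtain ⟨f₀, hf₀⟩ := hcon (((k : ℝ) + 2) * 2 ^ k)
    have hf₀pos : 0 < ‖f₀‖ := by
      rcases eq_or_lt_of_le (norm_nonneg f₀) with h | h
      · exfalso
        have : f₀ = 0 := by rwa [eq_comm, norm_eq_zero] at h
        rw [this, map_zero] at hf₀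
        simp at hf₀
      · exact h
    set t : ℝ := (2:ℝ)⁻¹ ^ k / ‖f₀‖ with htdef
    have ht : 0 < t := div_pos (by positivity) hf₀pos
    set g₁ : C₀(Ω, X) := (t : ℂ) • f₀ with hg₁def
    have hg₁norm : ‖g₁‖ = (2:ℝ)⁻¹ ^ k := by
      rw [hg₁def, norm_smul, Complex.norm_real, Real.norm_eq_abs, abs_of_pos ht, htdef,
        div_mul_cancel₀ _ (ne_of_gt hf₀pos)]
    have hpow : (2:ℝ) ^ k * (2:ℝ)⁻¹ ^ k = 1 := by
      rw [← mul_pow]; norm_num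
    have hg₁val : ((k : ℝ) + 2) < ‖θ g₁ ν₀‖ := by
      have : θ g₁ = (t : ℂ) • θ f₀ := by rw [hg₁def, map_smul]
      rw [this, ZeroAtInftyContinuousMap.smul_apply, norm_smul, Complex.norm_real,
        Real.norm_eq_abs, abs_of_pos ht]
      have h1 : t * (((k : ℝ) + 2) * 2 ^ k * ‖f₀‖) < t * ‖θ f₀ ν₀‖ := by
        apply mul_lt_mul_of_pos_left _ ht
        calc ((k : ℝ) + 2) * 2 ^ k * ‖f₀‖ = ((k : ℝ) + 2) * 2 ^ k * ‖f₀‖ := rfl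
          _ < ‖θ f₀ ν₀‖ := hf₀
      have h2 : t * (((k : ℝ) + 2) * 2 ^ k * ‖f₀‖) = (k : ℝ) + 2 := by
        rw [htdef]
        field_simp
        nlinarith [hpow]
      linarith [h1, h2.symm.le]
    -- cut g₁ down to a function supported in W with the same germ at ω₀
    obtain ⟨φ, N, kc, hNo, hωN, hφ1, hkc, hkcW, hφ0, hφI⟩ := bump hWo hω₀W
    set g₂ : C₀(Ω, X) := bmul φ hφI g₁ with hg₂def
    have hg₂norm : ‖g₂‖ ≤ (2:ℝ)⁻¹ ^ k := hg₁norm ▸ bmul_norm_le φ hφI g₁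
    have hg₂eq : θ g₂ ν₀ = θ g₁ ν₀ := by
      refine key_eq ν₀ g₂ g₁ N hNo hωN (fun x hx => ?_)
      rw [hg₂def, bmul_apply, hφ1 x hx, one_smul]
    have hg₂val : ((k : ℝ) + 1) < ‖θ g₂ ν₀‖ := by rw [hg₂eq]; linarith
    have hg₂supp : ∀ x, x ∉ kc → g₂ x = 0 := by
      intro x hx
      rw [hg₂def, bmul_apply, hφ0 x hx, zero_smul]
    -- find a nearby point ν₁ ≠ ν₀ where θ g₂ is still large
    set S : Set Δ := {ν | ((k : ℝ) + 1) < ‖θ g₂ ν‖} with hSdef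
    have hSo : IsOpen S := isOpen_lt continuous_const ((map_continuous (θ g₂)).norm)
    have hSmem : S ∈ 𝓝[≠] ν₀ :=
      mem_nhdsWithin_of_mem_nhds (hSo.mem_nhds hg₂val)
    have : (𝓝[≠] ν₀).NeBot := hni ν₀
    obtain ⟨ν₁, hν₁S, hν₁c⟩ := Filter.nonempty_of_mem (Filter.inter_mem hSmem self_mem_nhdsWithin)
    have hν₁ne : ν₁ ≠ ν₀ := hν₁c
    set ω₁ := σ ν₁ with hω₁def
    have hω₁ne : ω₁ ≠ ω₀ := fun h => hν₁ne (hσ h)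
    have hν₁big : ((k : ℝ) + 1) < ‖θ g₂ ν₁‖ := hν₁S
    have hω₁kc : ω₁ ∈ kc := by
      by_contra hx
      have h0 : θ g₂ ν₁ = 0 :=
        hloc ν₁ g₂ ⟨kcᶜ, hkc.isClosed.isOpen_compl, hx, fun x hxx => hg₂supp x hxx⟩
      rw [h0, norm_zero] at hν₁big
      have : (0:ℝ) ≤ (k:ℝ) := Nat.cast_nonneg k
      linarith
    have hω₁W : ω₁ ∈ W := hkcW hω₁kc
    have hW'o : IsOpen (W \ {ω₀}) := hWo.sdiff isClosed_singleton
    have hω₁W' : ω₁ ∈ W \ {ω₀} := ⟨hω₁W, by simp [hω₁ne]⟩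
    obtain ⟨K₁, hK₁c, hω₁K₁, hK₁W'⟩ := exists_compact_subset hW'o hω₁W'
    set V₁ := interior K₁ with hV₁def
    have hV₁cl : closure V₁ ⊆ W \ {ω₀} :=
      (closure_minimal interior_subset hK₁c.isClosed).trans hK₁W'
    obtain ⟨φ₂, N₂, k₂, hN₂o, hω₁N₂, hφ₂1, hk₂c, hk₂V, hφ₂0, hφ₂I⟩ := bump isOpen_interior hω₁K₁
    set g₃ := bmul φ₂ hφ₂I g₂ with hg₃def
    have hg₃norm : ‖g₃‖ ≤ (2:ℝ)⁻¹ ^ k := le_trans (bmul_norm_le _ _ _) hg₂norm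
    have hg₃eq : θ g₃ ν₁ = θ g₂ ν₁ :=
      key_eq ν₁ g₃ g₂ N₂ hN₂o hω₁N₂
        (fun x hx => by rw [hg₃def, bmul_apply, hφ₂1 x hx, one_smul])
    have hg₃supp : ∀ x, x ∉ V₁ → g₃ x = 0 := fun x hx => by
      rw [hg₃def, bmul_apply, hφ₂0 x (fun h => hx (hk₂V h)), zero_smul]
    refine ⟨⟨k, ν₁, g₃, V₁⟩, ⟨isOpen_interior, hω₁K₁, ?_, hg₃norm, ?_, hg₃supp⟩, ?_⟩
    · intro hcl; exact (hV₁cl hcl).2 rfl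
    · rw [hg₃eq]; linarith
    · intro x hxs
      refine ⟨Nat.lt_succ_of_le (Finset.le_sup hxs), ?_⟩
      refine Set.disjoint_left.mpr (fun z hzx hzV₁ => ?_)
      have hzW : z ∈ W := (hV₁cl (subset_closure hzV₁)).1
      exact hzW (mem_biUnion hxs (subset_closure hzx))
  obtain ⟨a, hPa, hra⟩ := exists_seq_of_forall_finset_exists P r step
  have hkm : StrictMono fun n => (a n).k :=
    strictMono_nat_of_lt_succ (fun n => (hra n (n+1) (Nat.lt_succ_self n)).1)
  have hkn : ∀ n, n ≤ (a n).k := fun n => hkm.le_apply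
  have hsum : Summable (fun n => (a n).g) := by
    refine Summable.of_norm_bounded (g := fun n => ((1:ℝ)/2)^n) summable_geometric_two (fun n => ?_)
    calc ‖(a n).g‖ ≤ (2:ℝ)⁻¹ ^ (a n).k := (hPa n).2.2.2.1
      _ ≤ (2:ℝ)⁻¹ ^ n := pow_le_pow_of_le_one (by norm_num) (by norm_num) (hkn n)
      _ = ((1:ℝ)/2)^n := by norm_num
  set F := ∑' n, (a n).g with hFdef
  have hFval : ∀ n, ∀ x ∈ (a n).V, F x = (a n).g x := by
    intro n x hx
    have h1 : F x = ∑' m, (a m).g x := by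
      have := (evCLM (Ω := Ω) (X := X) x).map_tsum hsum
      simpa using this
    rw [h1]
    refine tsum_eq_single n (fun m hmn => ?_)
    rcases lt_or_gt_of_ne hmn with h | h
    · exact (hPa m).2.2.2.2.2 x (Set.disjoint_right.mp (hra m n h).2 hx)
    · exact (hPa m).2.2.2.2.2 x (Set.disjoint_left.mp (hra n m h).2 hx)
  have hbig : ∀ n : ℕ, (n:ℝ) < ‖θ F‖ := by
    intro n
    have he : θ F ((a n).ν) = θ ((a n).g) ((a n).ν) :=
      key_eq _ F _ (a n).V (hPa n).1 (hPa n).2.1 (hFval n)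
    have h2 : (((a n).k : ℝ)) < ‖θ F ((a n).ν)‖ := by rw [he]; exact (hPa n).2.2.2.2.1
    have h3 : ‖θ F ((a n).ν)‖ ≤ ‖θ F‖ := norm_apply_le' _ _
    have h4 : (n:ℝ) ≤ (((a n).k : ℝ)) := by exact_mod_cast hkn n
    linarith
  obtain ⟨n, hn⟩ := exists_nat_gt ‖θ F‖
  exact absurd (hbig n) (by linarith)

end Stmt9Aux

theorem stmt_9
    {Ω Δ : Type*} [TopologicalSpace Ω] [LocallyCompactSpace Ω] [T2Space Ω]
    [TopologicalSpace Δ] [LocallyCompactSpace Δ] [T2Space Δ]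
    (hni : ∀ ν : Δ, (𝓝[≠] ν).NeBot)
    {X Y : Type*} [NormedAddCommGroup X] [NormedSpace ℂ X] [CompleteSpace X]
    [NormedAddCommGroup Y] [NormedSpace ℂ Y] [CompleteSpace Y]
    (σ : Δ → Ω) (hσ : Function.Injective σ)
    (θ : C₀(Ω, X) →ₗ[ℂ] C₀(Δ, Y))
    (hloc : ∀ (ν : Δ) (f : C₀(Ω, X)),
      (∃ U : Set Ω, IsOpen U ∧ σ ν ∈ U ∧ ∀ ω ∈ U, f ω = 0) → θ f ν = 0) :
    ∃ C : ℝ, ∀ f : C₀(Ω, X), ‖θ f‖ ≤ C * ‖f‖ := by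
  have hpt := fun ν => Stmt9Aux.pointwise_bound hni σ hσ θ hloc ν
  choose C hC using hpt
  let T : Δ → C₀(Ω, X) →L[ℂ] Y := fun ν => LinearMap.mkContinuous
    { toFun := fun f => θ f ν
      map_add' := fun f g => show θ (f + g) ν = θ f ν + θ g ν by rw [map_add]; rfl
      map_smul' := fun c f => show θ (c • f) ν = c • θ f ν by rw [map_smul]; rfl } (C ν) (fun f => hC ν f)
  obtain ⟨C', hC'⟩ := banach_steinhaus (g := T)
    (fun f => ⟨‖θ f‖, fun ν => Stmt9Aux.norm_apply_le' (θ f) ν⟩)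
  refine ⟨max C' 0, fun f => ?_⟩
  refine Stmt9Aux.norm_le_of' (mul_nonneg (le_max_right _ _) (norm_nonneg f)) (fun ν => ?_)
  calc ‖θ f ν‖ = ‖T ν f‖ := rfl
    _ ≤ ‖T ν‖ * ‖f‖ := (T ν).le_opNorm f
    _ ≤ C' * ‖f‖ := mul_le_mul_of_nonneg_right (hC' ν) (norm_nonneg f)
    _ ≤ max C' 0 * ‖f‖ := mul_le_mul_of_nonneg_right (le_max_left _ _) (norm_nonneg f)
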